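/- If a term u matches the renamed (linear) version of t via substitution σ and u is consistent with respect to the consistency partition of t, then the substitution ρ defined by ρ(x) = u[p] for any position p with t[p] = x is well-defined on vars(t) and satisfies t^ρ = u. -/

import Mathlib

inductive Term (V F : Type) : Type where
  | var : V → Term V F
  | app : F → List (Term V F) → Term V F

namespace Term

variable {V W U F : Type}

/-- Equality modulo variables. -/
inductive EqMod : Term V F → Term W F → Prop
  | var (x : V) (y : W) : EqMod (var x) (var y)
  | app (f : F) {ts : List (Term V F)} {us : List (Term W F)}
      (hlen : ts.length = us.length)
      (h : ∀ tu ∈ List.zip ts us, EqMod tu.1 tu.2) :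
      EqMod (app f ts) (app f us)

/-- Subterm at a position (0-based). -/
def subterm : List ℕ → Term V F → Option (Term V F)
  | [], t => some t
  | _ :: _, var _ => none
  | i :: p, app _ ts => (ts[i]?).bind (subterm p)

/-- Homomorphic application of a substitution. -/
def subst (σ : V → Term W F) : Term V F → Term W F
  | var x => σ x
  | app f ts => app f (ts.attach.map fun t => subst σ t.1)
termination_by t => sizeOf t
decreasing_by simp only [Term.app.sizeOf_spec]; have := List.sizeOf_lt_of_mem t.2; omega

/-- Number of occurrences of a variable. -/
def countVar [DecidableEq V] (x : V) : Term V F → ℕ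
  | var y => if y = x then 1 else 0
  | app _ ts => (ts.attach.map fun t => countVar x t.1).sum
termination_by t => sizeOf t
decreasing_by simp only [Term.app.sizeOf_spec]; have := List.sizeOf_lt_of_mem t.2; omega

/-- A term is linear if every variable occurs at most once. -/
def Linear [DecidableEq V] (t : Term V F) : Prop := ∀ x, countVar x t ≤ 1

/-- Well-formed with respect to a ranked alphabet. -/
inductive WF (ar : F → ℕ) : Term V F → Prop
  | var (x : V) : WF ar (var x)
  | app (f : F) {ts : List (Term V F)} (hlen : ts.length = ar f)
      (h : ∀ t ∈ ts, WF ar t) : WF ar (app f ts)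

/-- Ground terms contain no variables. -/
inductive Ground : Term V F → Prop
  | app (f : F) {ts : List (Term V F)} (h : ∀ t ∈ ts, Ground t) : Ground (app f ts)

/-- Renaming: replace the variable at position p by the position variable p. -/
def rename1 : Term V F → List ℕ → Term (List ℕ) F
  | var _, p => var p
  | app f ts, p => app f (ts.attach.mapIdx fun i t => rename1 t.1 (p ++ [i]))
termination_by t _ => sizeOf t
decreasing_by simp only [Term.app.sizeOf_spec]; have := List.sizeOf_lt_of_mem t.2; omega

theorem subst_app (σ : V → Term W F) (f : F) (ts : List (Term V F)) :
    subst σ (app f ts) = app f (ts.map (subst σ)) := by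
  rw [subst]
  congr 1
  apply List.ext_getElem
  · simp
  · intro i h1 h2; simp

theorem rename1_app (f : F) (ts : List (Term V F)) (q : List ℕ) :
    rename1 (app f ts) q = app f (ts.mapIdx fun i t => rename1 t (q ++ [i])) := by
  rw [rename1]
  congr 1
  apply List.ext_getElem
  · simp
  · intro i h1 h2; simp

theorem subterm_rename1 (p : List ℕ) : ∀ (t : Term V F) (q : List ℕ) (x : V),
    subterm p t = some (var x) → subterm p (rename1 t q) = some (var (q ++ p)) := by
  induction p with
  | nil =>
    intro t q x h
    cases t with
    | var y => simp [rename1, subterm]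
    | app f ts => simp [subterm] at h
  | cons i p ih =>
    intro t q x h
    cases t with
    | var y => simp [subterm] at h
    | app f ts =>
      simp only [subterm, Option.bind_eq_some_iff] at h
      obtain ⟨s, hs, hsub⟩ := h
      rw [rename1_app]
      simp only [subterm, List.getElem?_mapIdx, hs, Option.map_some, Option.bind_some]
      have := ih s (q ++ [i]) x hsub
      rwa [List.append_assoc, List.singleton_append] at this

theorem subterm_subst (p : List ℕ) : ∀ (s : Term V F) (σ : V → Term W F) (y : V),
    subterm p s = some (var y) → subterm p (subst σ s) = some (σ y) := by
  induction p with
  | nil =>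
    intro s σ y h
    cases s with
    | var z => simp [subterm] at h ⊢; rw [h.symm]; simp [subst]
    | app f ts => simp [subterm] at h
  | cons i p ih =>
    intro s σ y h
    cases s with
    | var z => simp [subterm] at h
    | app f ts =>
      simp only [subterm, Option.bind_eq_some_iff] at h
      obtain ⟨s', hs, hsub⟩ := h
      rw [subst_app]
      simp only [subterm, List.getElem?_map, hs, Option.map_some, Option.bind_some]
      exact ih s' σ y hsub

theorem subst_eq_rename1_subst {t : Term V F} {ρ : V → Term V F} {σ : List ℕ → Term V F}
    (hρ : ∀ (x : V) (p : List ℕ), subterm p t = some (var x) → ρ x = σ p) :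
    ∀ (s : Term V F) (q : List ℕ),
      (∀ (p : List ℕ) (x : V), subterm p s = some (var x) →
        subterm (q ++ p) t = some (var x)) →
      subst ρ s = subst σ (rename1 s q) := by
  intro s
  induction s using Term.rec
    (motive_2 := fun ts => ∀ s ∈ ts, ∀ (q : List ℕ),
      (∀ (p : List ℕ) (x : V), subterm p s = some (var x) →
        subterm (q ++ p) t = some (var x)) → subst ρ s = subst σ (rename1 s q)) with
  | var x =>
    intro q hq
    have h0 : subterm ([] : List ℕ) (var x : Term V F) = some (var x) := rfl
    have := hq [] x h0
    rw [List.append_nil] at this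
    simp only [rename1, subst]
    exact hρ x q this
  | app f ts ih =>
    intro q hq
    rw [rename1_app, subst_app, subst_app]
    congr 1
    apply List.ext_getElem
    · simp
    · intro i h1 h2
      have h1' : i < ts.length := by simpa using h1
      simp only [List.getElem_map, List.getElem_mapIdx]
      apply ih (ts[i]'h1') (List.getElem_mem _) (q ++ [i])
      intro p x hp
      have : subterm (i :: p) (app f ts) = some (var x) := by
        simp only [subterm, List.getElem?_eq_getElem h1', Option.bind_some]
        exact hp
      have := hq (i :: p) x this
      rwa [List.append_assoc, List.singleton_append]
  | nil => rename_i s hs q hq; simp at hs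
  | cons a as iha ihas =>
    rename_i s hs q hq
    rcases List.mem_cons.mp hs with h | h
    · subst h; exact iha q hq
    · exact ihas s h q hq

end Term

theorem consistent_match_gives_subst {V F : Type} (t u : Term V F)
    (σ : List ℕ → Term V F) (hmatch : Term.subst σ (Term.rename1 t []) = u)
    (hcons : ∀ (p q : List ℕ) (x : V), Term.subterm p t = some (Term.var x) →
      Term.subterm q t = some (Term.var x) → Term.subterm p u = Term.subterm q u) :
    ∃ ρ : V → Term V F,
      (∀ (x : V) (p : List ℕ), Term.subterm p t = some (Term.var x) →
        Term.subterm p u = some (ρ x)) ∧ Term.subst ρ t = u := by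
  classical
  -- key fact: at every variable position p of t, u has subterm σ p
  have key : ∀ (p : List ℕ) (x : V), Term.subterm p t = some (Term.var x) →
      Term.subterm p u = some (σ p) := by
    intro p x hp
    have h1 := Term.subterm_rename1 p t [] x hp
    rw [List.nil_append] at h1
    have h2 := Term.subterm_subst p _ σ p h1
    rwa [hmatch] at h2
  set ρ : V → Term V F := fun x =>
    if h : ∃ p, Term.subterm p t = some (Term.var x) then σ h.choose else Term.var x with hρdef
  have hρ : ∀ (x : V) (p : List ℕ), Term.subterm p t = some (Term.var x) → ρ x = σ p := by
    intro x p hp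
    have hex : ∃ q, Term.subterm q t = some (Term.var x) := ⟨p, hp⟩
    have hch := hex.choose_spec
    have h1 := key _ x hch
    have h2 := key p x hp
    have := hcons p hex.choose x hp hch
    rw [h1, h2] at this
    simp only [hρdef, dif_pos hex]
    exact (Option.some_injective _ this).symm
  refine ⟨ρ, ?_, ?_⟩
  · intro x p hp
    rw [key p x hp, hρ x p hp]
  · have := Term.subst_eq_rename1_subst hρ t []
    rw [this (by intro p x hp; rwa [List.nil_append]), hmatch]
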